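/- Let R be a ℂ-algebra, λ ∈ ℕ, A_λ = λ²/4 + λ/2, and let f = A_λ·t⁻² + Σ_{i≥−1} z_i tⁱ ∈ R((t)). Then f belongs to Op₁^λ(R) (i.e., there exists ψ ∈ R[[t]] with f = A_λ/t² − (λ/t)ψ + ψ² + ψ') if and only if there exists a formal power series φ(t) ∈ R[[t]] with φ(0) = 1 such that y = t^{−λ/2}φ(t) formally solves ÿ = f·y, i.e., φ satisfies t²φ'' − λtφ' + (A_λ − t²f)φ = 0. -/

import Mathlib

open PowerSeries



noncomputable def sol9 {R : Type*} [CommRing R] [Algebra ℂ R] (ψ : PowerSeries R) : ℕ → R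
  | 0 => 1
  | (n+1) => algebraMap ℂ R (((n : ℂ)+1)⁻¹) *
      ∑ k ∈ Finset.range (n+1), PowerSeries.coeff k ψ * sol9 ψ (n - k)
  decreasing_by omega

lemma sol9_deriv {R : Type*} [CommRing R] [Algebra ℂ R] (ψ : PowerSeries R) :
    PowerSeries.derivative R (PowerSeries.mk (sol9 ψ)) = ψ * PowerSeries.mk (sol9 ψ) := by
  ext n
  rw [PowerSeries.coeff_derivative, PowerSeries.coeff_mk, PowerSeries.coeff_mul]
  rw [Finset.Nat.sum_antidiagonal_eq_sum_range_succ_mk]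
  simp only [PowerSeries.coeff_mk]
  rw [sol9, mul_comm, ← mul_assoc]
  have : ((n : R) + 1) * algebraMap ℂ R (((n : ℂ)+1)⁻¹) = 1 := by
    rw [show ((n : R) + 1) = algebraMap ℂ R ((n : ℂ) + 1) by push_cast; ring, ← map_mul]
    rw [mul_inv_cancel₀ (Nat.cast_add_one_ne_zero n)]
    simp
  rw [this, one_mul]

lemma dmul9 {R : Type*} [CommRing R] (a b : PowerSeries R) :
    PowerSeries.derivative R (a * b) =
      a * PowerSeries.derivative R b + b * PowerSeries.derivative R a := by
  simpa [smul_eq_mul] using (PowerSeries.derivative R).leibniz a b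

lemma key9 {R : Type*} [CommRing R] [Algebra ℂ R] (l : R) (G : PowerSeries R) :
    (∃ ψ : PowerSeries R, G = PowerSeries.C l * (PowerSeries.X * ψ)
        - PowerSeries.X ^ 2 * ψ ^ 2 - PowerSeries.X ^ 2 * PowerSeries.derivative R ψ) ↔
    (∃ φ : PowerSeries R, PowerSeries.constantCoeff φ = 1 ∧
      PowerSeries.X ^ 2 * PowerSeries.derivative R (PowerSeries.derivative R φ)
        - PowerSeries.C l * (PowerSeries.X * PowerSeries.derivative R φ) + G * φ = 0) := by
  constructor
  · rintro ⟨ψ, rfl⟩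
    refine ⟨PowerSeries.mk (sol9 ψ), by simp [sol9], ?_⟩
    set φ := PowerSeries.mk (sol9 ψ) with hφdef
    have e1 : PowerSeries.derivative R φ = ψ * φ := sol9_deriv ψ
    rw [e1, dmul9]
    rw [e1]
    ring
  · rintro ⟨φ, h0, heq⟩
    set χ := PowerSeries.invOfUnit φ 1 with hχ
    have hinv : φ * χ = 1 := PowerSeries.mul_invOfUnit φ 1 (by simp [h0])
    set ψ := PowerSeries.derivative R φ * χ with hψ
    have e1 : ψ * φ = PowerSeries.derivative R φ := by
      rw [hψ, mul_assoc, mul_comm χ φ, hinv, mul_one]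
    have e2 : ψ * PowerSeries.derivative R φ + φ * PowerSeries.derivative R ψ
        = PowerSeries.derivative R (PowerSeries.derivative R φ) := by
      have := dmul9 ψ φ
      rw [e1] at this
      exact this.symm
    refine ⟨ψ, ?_⟩
    have hGφ : G * φ = (PowerSeries.C l * (PowerSeries.X * ψ)
        - PowerSeries.X ^ 2 * ψ ^ 2 - PowerSeries.X ^ 2 * PowerSeries.derivative R ψ) * φ := by
      linear_combination heq
        + (PowerSeries.X ^ 2 * ψ - PowerSeries.C l * PowerSeries.X) * e1
        + PowerSeries.X ^ 2 * e2
    calc G = G * (φ * χ) := by rw [hinv, mul_one]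
    _ = (G * φ) * χ := by ring
    _ = _ := by rw [hGφ, mul_assoc, hinv, mul_one]



section helpers
variable {R : Type*} [CommRing R]

lemma hs_C (r : R) :
    HahnSeries.ofPowerSeries ℤ R (PowerSeries.C r) = HahnSeries.single (0 : ℤ) r := by
  rw [HahnSeries.ofPowerSeries_C]; rfl

lemma hs_X2 :
    HahnSeries.ofPowerSeries ℤ R (PowerSeries.X ^ 2) = HahnSeries.single (2 : ℤ) (1 : R) := by
  rw [HahnSeries.ofPowerSeries_X_pow]; norm_num

lemma hs_CX (r : R) :
    HahnSeries.ofPowerSeries ℤ R (PowerSeries.C r * PowerSeries.X)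
      = HahnSeries.single (1 : ℤ) r := by
  rw [map_mul, hs_C, HahnSeries.ofPowerSeries_X, HahnSeries.single_mul_single]
  norm_num
end helpers

/-- for a `ℂ`-algebra `R`, `λ ∈ ℕ`, `A_λ = λ²/4 + λ/2`, and
`f = A_λ t⁻² + Σ_{i ≥ −1} zᵢ tⁱ ∈ R((t))`, the following are equivalent:
(1) `f ∈ Op₁^λ(R)`, i.e. there is `ψ ∈ R[[t]]` with `f = A_λ/t² − (λ/t)ψ + ψ² + ψ′`;
(2) there is `φ ∈ R[[t]]` with `φ(0) = 1` such that `y = t^{−λ/2}φ(t)` formally solves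
`ÿ = f y`, i.e. `t²φ″ − λtφ′ + (A_λ − t²f)φ = 0`. -/
theorem stmt9 (R : Type*) [CommRing R] [Algebra ℂ R] (lam : ℕ) (Alam : ℂ)
    (hA : Alam = (lam : ℂ) ^ 2 / 4 + (lam : ℂ) / 2)
    (f : LaurentSeries R)
    (hf1 : ∀ n : ℤ, n < -2 → f.coeff n = 0)
    (hf2 : f.coeff (-2) = algebraMap ℂ R Alam) :
    (∃ ψ : PowerSeries R,
      f = HahnSeries.single (-2 : ℤ) (algebraMap ℂ R Alam)
          - HahnSeries.single (-1 : ℤ) ((lam : R)) * (HahnSeries.ofPowerSeries ℤ R ψ)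
          + HahnSeries.ofPowerSeries ℤ R (ψ ^ 2)
          + HahnSeries.ofPowerSeries ℤ R (PowerSeries.derivative R ψ)) ↔
    (∃ φ : PowerSeries R, PowerSeries.constantCoeff φ = 1 ∧
      HahnSeries.ofPowerSeries ℤ R
          (PowerSeries.X ^ 2 * PowerSeries.derivative R (PowerSeries.derivative R φ))
        - HahnSeries.single (0 : ℤ) ((lam : R)) *
            HahnSeries.ofPowerSeries ℤ R (PowerSeries.X * PowerSeries.derivative R φ)
        + (HahnSeries.single (0 : ℤ) (algebraMap ℂ R Alam)
            - HahnSeries.single (2 : ℤ) 1 * f) * HahnSeries.ofPowerSeries ℤ R φ = 0) := by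
  set ι := HahnSeries.ofPowerSeries ℤ R with hι
  set A' : R := algebraMap ℂ R Alam with hA'
  set lR : R := (lam : R) with hlR
  set u : LaurentSeries R := HahnSeries.single (2 : ℤ) (1 : R) with hu
  have hvu : HahnSeries.single (-2 : ℤ) (1 : R) * u = 1 := by
    rw [hu, HahnSeries.single_mul_single]
    norm_num [HahnSeries.single_zero_one]
  have hcan : ∀ x y : LaurentSeries R, u * x = u * y → x = y := by
    intro x y h
    have h2 := congrArg (fun z => HahnSeries.single (-2 : ℤ) (1 : R) * z) h
    simpa only [← mul_assoc, hvu, one_mul] using h2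
  set B : PowerSeries R := PowerSeries.mk (fun n => f.coeff ((n : ℤ) - 2)) with hB
  have huf : u * f = ι B := by
    ext n
    have h1 : (u * f).coeff n = f.coeff (n - 2) := by
      have := HahnSeries.coeff_single_mul_add (r := (1:R)) (x := f) (a := n - 2) (b := (2:ℤ))
      simpa using this
    rw [h1, hι, PowerSeries.coeff_coe]
    split_ifs with hn
    · exact hf1 (n - 2) (by omega)
    · rw [hB, PowerSeries.coeff_mk, Int.natAbs_of_nonneg (not_lt.mp hn)]
  set G : PowerSeries R := PowerSeries.C A' - B with hG
  have step1 : (∃ ψ : PowerSeries R,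
      f = HahnSeries.single (-2 : ℤ) A' - HahnSeries.single (-1 : ℤ) lR * ι ψ
          + ι (ψ ^ 2) + ι (PowerSeries.derivative R ψ)) ↔
      (∃ ψ : PowerSeries R, G = PowerSeries.C lR * (PowerSeries.X * ψ)
        - PowerSeries.X ^ 2 * ψ ^ 2 - PowerSeries.X ^ 2 * PowerSeries.derivative R ψ) := by
    apply exists_congr
    intro ψ
    have hT : u * (HahnSeries.single (-2 : ℤ) A' - HahnSeries.single (-1 : ℤ) lR * ι ψ
          + ι (ψ ^ 2) + ι (PowerSeries.derivative R ψ))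
        = ι (PowerSeries.C A' - PowerSeries.C lR * (PowerSeries.X * ψ)
            + PowerSeries.X ^ 2 * ψ ^ 2
            + PowerSeries.X ^ 2 * PowerSeries.derivative R ψ) := by
      have t1 : u * HahnSeries.single (-2 : ℤ) A' = ι (PowerSeries.C A') := by
        rw [hu, HahnSeries.single_mul_single, hs_C]; norm_num
      have t2 : u * (HahnSeries.single (-1 : ℤ) lR * ι ψ)
          = ι (PowerSeries.C lR * (PowerSeries.X * ψ)) := by
        rw [← mul_assoc, hu, HahnSeries.single_mul_single]
        rw [show (2 : ℤ) + (-1) = 1 by norm_num, one_mul]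
        rw [show PowerSeries.C lR * (PowerSeries.X * ψ)
            = (PowerSeries.C lR * PowerSeries.X) * ψ by ring, map_mul, hs_CX]
      have t3 : ∀ g : PowerSeries R, u * ι g = ι (PowerSeries.X ^ 2 * g) := by
        intro g; rw [map_mul, hs_X2, hu]
      rw [mul_add, mul_add, mul_sub, t1, t2, t3, t3, map_add, map_add, map_sub]
    constructor
    · intro h
      have h2 : ι B = ι (PowerSeries.C A' - PowerSeries.C lR * (PowerSeries.X * ψ)
            + PowerSeries.X ^ 2 * ψ ^ 2 + PowerSeries.X ^ 2 * PowerSeries.derivative R ψ) := by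
        rw [← huf, h, hT]
      have h3 := HahnSeries.ofPowerSeries_injective h2
      rw [hG]
      linear_combination -h3
    · intro h
      apply hcan
      rw [huf, hT]
      congr 1
      rw [hG] at h
      linear_combination -h
  have step2 : ∀ φ : PowerSeries R,
      (ι (PowerSeries.X ^ 2 * PowerSeries.derivative R (PowerSeries.derivative R φ))
        - HahnSeries.single (0 : ℤ) lR * ι (PowerSeries.X * PowerSeries.derivative R φ)
        + (HahnSeries.single (0 : ℤ) A' - u * f) * ι φ = 0) ↔
      (PowerSeries.X ^ 2 * PowerSeries.derivative R (PowerSeries.derivative R φ)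
        - PowerSeries.C lR * (PowerSeries.X * PowerSeries.derivative R φ) + G * φ = 0) := by
    intro φ
    have hrw : ι (PowerSeries.X ^ 2 * PowerSeries.derivative R (PowerSeries.derivative R φ))
        - HahnSeries.single (0 : ℤ) lR * ι (PowerSeries.X * PowerSeries.derivative R φ)
        + (HahnSeries.single (0 : ℤ) A' - u * f) * ι φ
        = ι (PowerSeries.X ^ 2 * PowerSeries.derivative R (PowerSeries.derivative R φ)
            - PowerSeries.C lR * (PowerSeries.X * PowerSeries.derivative R φ) + G * φ) := by
      rw [huf]
      simp only [hG, map_add, map_sub, map_mul, ← hs_C]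
      rfl
    rw [hrw]
    constructor
    · intro h
      apply HahnSeries.ofPowerSeries_injective (Γ := ℤ)
      rw [h, map_zero]
    · intro h
      rw [h, map_zero]
  rw [step1]
  constructor
  · rintro ⟨ψ, hψ⟩
    obtain ⟨φ, h0, hODE⟩ := (key9 lR G).mp ⟨ψ, hψ⟩
    exact ⟨φ, h0, (step2 φ).mpr hODE⟩
  · rintro ⟨φ, h0, hODE⟩
    exact (key9 lR G).mpr ⟨φ, h0, (step2 φ).mp hODE⟩
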